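/- Let k ≥ 2, let λ_{ij}, μ_{ij} be nonzero complex numbers for (i,j) ∈ P, and let y_1,…,y_k ∈ ℂ be such that for every i and every j ≠ i one has y_i ≠ a_{ij} and y_i ≠ a_{ji}. Then the following are equivalent: (1) there exist polynomials Q_1,…,Q_k ∈ ℂ[ζ], each of degree at most k−1 and not all identically zero, such that Q_i(y_i) = 0 for every i and λ_{ij}·Q_i(a_{ij}) + μ_{ij}·Q_j(a_{ij}) = 0 for every (i,j) ∈ P; (2) Λ(y_1,…,y_k) = 0, where Λ(u_1,…,u_k) = ϑ( (λ_{ij}·(a_{ij} − u_i)), (μ_{ij}·(a_{ij} − u_j)) ). -/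
import Mathlib


namespace ReducibleSpectral

noncomputable section

/-- The row index `(i, t)` (with `t : Fin (k-1)`) corresponds to the pair `(i, j) ∈ P`
(where `P = {(i,j) : i ≠ j}`), with `j` the `t`-th element of `{0,…,k-1} \ {i}`;
this identification is order-preserving for the lexicographic orders. -/
def colToRow (k : ℕ) (i : Fin k) (t : Fin (k - 1)) : Fin k :=
  if (t : ℕ) < (i : ℕ) then ⟨t, by have := t.isLt; omega⟩
  else ⟨(t : ℕ) + 1, by have := t.isLt; have := i.isLt; omega⟩

/-- The matrix `Ξ(λ,μ)`: rows indexed by `P = {(i,j) : i ≠ j}` (in lexicographic order,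
encoded via `colToRow`), columns indexed by pairs `(m,n)`, `m ∈ {1,…,k}`, `n ∈ {0,…,k-2}`
(lexicographic); the entry at row `(i,j)`, column `(m,n)` is `λ_{ij}·a_{ij}^n` if `m = i`,
`μ_{ij}·a_{ij}^n` if `m = j`, and `0` otherwise. -/
def Xi (k : ℕ) (a lam mu : Fin k → Fin k → ℂ) :
    Matrix (Fin k × Fin (k - 1)) (Fin k × Fin (k - 1)) ℂ :=
  fun p q =>
    if q.1 = p.1 then lam p.1 (colToRow k p.1 p.2) * a p.1 (colToRow k p.1 p.2) ^ (q.2 : ℕ)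
    else if q.1 = colToRow k p.1 p.2 then
      mu p.1 (colToRow k p.1 p.2) * a p.1 (colToRow k p.1 p.2) ^ (q.2 : ℕ)
    else 0

/-- The extended theta function `ϑ(λ,μ) = det Ξ(λ,μ)`. -/
def theta (k : ℕ) (a lam mu : Fin k → Fin k → ℂ) : ℂ := (Xi k a lam mu).det

/-- The index set `P = {(i,j) : i,j ∈ {1,…,k}, i ≠ j}` as a finset. -/
def Pfin (k : ℕ) : Finset (Fin k × Fin k) :=
  Finset.univ.filter fun p => p.1 ≠ p.2

/-- For `L ⊆ P`, the set `L_i = {(i,j) ∈ L} ∪ {(m,i) ∈ P : (m,i) ∉ L}`. -/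
def Lset (k : ℕ) (L : Finset (Fin k × Fin k)) (i : Fin k) : Finset (Fin k × Fin k) :=
  (L.filter fun p => p.1 = i) ∪ ((Pfin k \ L).filter fun p => p.2 = i)

/-- `L ⊆ P` is regular iff every `L_i` has cardinality `k - 1`. -/
def IsRegular (k : ℕ) (L : Finset (Fin k × Fin k)) : Prop :=
  ∀ i : Fin k, (Lset k L i).card = k - 1


/-- The function `Λ(u_1,…,u_k) = ϑ((λ_{ij}·(a_{ij} − u_i)), (μ_{ij}·(a_{ij} − u_j)))`. -/
def LambdaFun (k : ℕ) (a lam mu : Fin k → Fin k → ℂ) (u : Fin k → ℂ) : ℂ :=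
  theta k a (fun i j => lam i j * (a i j - u i)) (fun i j => mu i j * (a i j - u j))

-- auxiliary
open Polynomial in
def Rpoly (k : ℕ) (c : Fin k × Fin (k - 1) → ℂ) (i : Fin k) : Polynomial ℂ :=
  ∑ n : Fin (k - 1), C (c (i, n)) * X ^ (n : ℕ)

lemma colToRow_ne (k : ℕ) (i : Fin k) (t : Fin (k - 1)) : colToRow k i t ≠ i := by
  unfold colToRow
  split <;> simp [Fin.ext_iff] <;> omega

lemma colToRow_surj (k : ℕ) (i j : Fin k) (h : i ≠ j) :
    ∃ t : Fin (k - 1), colToRow k i t = j := by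
  have hij : (i : ℕ) ≠ (j : ℕ) := fun hh => h (Fin.ext hh)
  have hik := i.isLt; have hjk := j.isLt
  by_cases hc : (j : ℕ) < (i : ℕ)
  · refine ⟨⟨j, by omega⟩, ?_⟩
    unfold colToRow
    rw [if_pos (by simpa using hc)]
  · refine ⟨⟨(j : ℕ) - 1, by omega⟩, ?_⟩
    unfold colToRow
    rw [if_neg (by simp; omega)]
    exact Fin.ext (by simp; omega)

open Polynomial in
lemma eval_Rpoly (k : ℕ) (c : Fin k × Fin (k - 1) → ℂ) (i : Fin k) (x : ℂ) :
    (Rpoly k c i).eval x = ∑ n : Fin (k - 1), c (i, n) * x ^ (n : ℕ) := by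
  simp [Rpoly, eval_finset_sum]

open Polynomial in
lemma coeff_Rpoly (k : ℕ) (c : Fin k × Fin (k - 1) → ℂ) (i : Fin k) (n : Fin (k - 1)) :
    (Rpoly k c i).coeff (n : ℕ) = c (i, n) := by
  simp only [Rpoly, finset_sum_coeff, coeff_C_mul, coeff_X_pow]
  rw [Finset.sum_congr rfl (g := fun m : Fin (k-1) => if m = n then c (i, m) else 0)]
  · simp
  · intro m _
    by_cases h : m = n
    · subst h; simp
    · have : (n : ℕ) ≠ (m : ℕ) := fun hh => h (Fin.ext hh.symm)
      simp [h, this]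

open Polynomial in
lemma degree_Rpoly (k : ℕ) (c : Fin k × Fin (k - 1) → ℂ) (i : Fin k) :
    (Rpoly k c i).degree ≤ ((k - 2 : ℕ) : WithBot ℕ) := by
  refine (degree_sum_le _ _).trans ?_
  rw [Finset.sup_le_iff]
  intro n _
  refine (degree_C_mul_X_pow_le _ _).trans ?_
  exact_mod_cast (by have := n.isLt; omega : (n : ℕ) ≤ k - 2)

lemma mulVec_Xi (k : ℕ) (a lam mu : Fin k → Fin k → ℂ) (c : Fin k × Fin (k - 1) → ℂ)
    (p : Fin k × Fin (k - 1)) :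
    (Xi k a lam mu).mulVec c p =
      lam p.1 (colToRow k p.1 p.2) * (Rpoly k c p.1).eval (a p.1 (colToRow k p.1 p.2)) +
      mu p.1 (colToRow k p.1 p.2) *
        (Rpoly k c (colToRow k p.1 p.2)).eval (a p.1 (colToRow k p.1 p.2)) := by
  classical
  have hne : colToRow k p.1 p.2 ≠ p.1 := colToRow_ne k p.1 p.2
  have hmv : (Xi k a lam mu).mulVec c p = ∑ q : Fin k × Fin (k - 1), Xi k a lam mu p q * c q := by
    simp [Matrix.mulVec, dotProduct]
  rw [hmv, Fintype.sum_prod_type]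
  have key : ∀ m : Fin k, ∀ n : Fin (k - 1),
      Xi k a lam mu p (m, n) * c (m, n) =
        (if m = p.1 then
          lam p.1 (colToRow k p.1 p.2) * (c (p.1, n) * a p.1 (colToRow k p.1 p.2) ^ (n : ℕ))
         else 0) +
        (if m = colToRow k p.1 p.2 then
          mu p.1 (colToRow k p.1 p.2) *
            (c (colToRow k p.1 p.2, n) * a p.1 (colToRow k p.1 p.2) ^ (n : ℕ))
         else 0) := by
    intro m n
    simp only [Xi]
    by_cases h1 : m = p.1
    · subst h1; simp [Ne.symm hne]; ring
    · by_cases h2 : m = colToRow k p.1 p.2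
      · subst h2; simp [hne, h1]; ring
      · simp [h1, h2]
  simp only [key, Finset.sum_add_distrib, Finset.sum_ite_irrel, Finset.sum_const_zero,
    Finset.sum_ite_eq', Finset.mem_univ, if_true]
  rw [eval_Rpoly, eval_Rpoly, Finset.mul_sum, Finset.mul_sum]


/-- for nonzero `λ_{ij}, μ_{ij}` and points `y_i` avoiding the images of the
intersection points, there is a nonzero tuple of polynomials of degree at most `k−1`
vanishing at the `y_i` and satisfying the matching conditions iff `Λ(y_1,…,y_k) = 0`. -/
theorem section_vanishing_iff_Lambda_eq_zero (k : ℕ) (hk : 2 ≤ k)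
    (a lam mu : Fin k → Fin k → ℂ)
    (hlam : ∀ i j : Fin k, i ≠ j → lam i j ≠ 0)
    (hmu : ∀ i j : Fin k, i ≠ j → mu i j ≠ 0)
    (y : Fin k → ℂ)
    (hy : ∀ i j : Fin k, i ≠ j → y i ≠ a i j ∧ y i ≠ a j i) :
    (∃ Q : Fin k → Polynomial ℂ,
        (∀ i, (Q i).degree ≤ (k - 1 : ℕ)) ∧
        (∃ i, Q i ≠ 0) ∧
        (∀ i, (Q i).eval (y i) = 0) ∧
        (∀ i j : Fin k, i ≠ j →
          lam i j * (Q i).eval (a i j) + mu i j * (Q j).eval (a i j) = 0)) ↔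
      LambdaFun k a lam mu y = 0 := by
  classical
  set lam' : Fin k → Fin k → ℂ := fun i j => lam i j * (a i j - y i) with hlam'
  set mu' : Fin k → Fin k → ℂ := fun i j => mu i j * (a i j - y j) with hmu'
  have hLam : LambdaFun k a lam mu y = (Xi k a lam' mu').det := rfl
  rw [hLam, ← Matrix.exists_mulVec_eq_zero_iff]
  constructor
  · rintro ⟨Q, hdeg, ⟨i₀, hQ0⟩, hroot, hmatch⟩
    set R : Fin k → Polynomial ℂ := fun i => Q i /ₘ (Polynomial.X - Polynomial.C (y i)) with hR
    have hfac : ∀ i, (Polynomial.X - Polynomial.C (y i)) * R i = Q i := fun i =>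
      (Polynomial.mul_divByMonic_eq_iff_isRoot).mpr (hroot i)
    have hRdeg : ∀ i, (R i).natDegree < k - 1 := by
      intro i
      have h1 := Polynomial.natDegree_divByMonic (Q i) (Polynomial.monic_X_sub_C (y i))
      have h2 : (Q i).natDegree ≤ k - 1 := Polynomial.natDegree_le_iff_degree_le.mpr (hdeg i)
      rw [Polynomial.natDegree_X_sub_C] at h1
      show (Q i /ₘ (Polynomial.X - Polynomial.C (y i))).natDegree < k - 1
      omega
    set c : Fin k × Fin (k - 1) → ℂ := fun q => (R q.1).coeff (q.2 : ℕ) with hc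
    have heval : ∀ i x, (Rpoly k c i).eval x = (R i).eval x := by
      intro i x
      rw [eval_Rpoly, Polynomial.eval_eq_sum_range' (hRdeg i) x,
        ← Fin.sum_univ_eq_sum_range (fun n => (R i).coeff n * x ^ n) (k - 1)]
    have hQeval : ∀ i x, (Q i).eval x = (x - y i) * (R i).eval x := by
      intro i x
      rw [← hfac i]
      simp
    refine ⟨c, ?_, ?_⟩
    · have hR0 : R i₀ ≠ 0 := by
        intro h
        exact hQ0 (by rw [← hfac i₀, h, mul_zero])
      intro h
      have : c (i₀, ⟨(R i₀).natDegree, hRdeg i₀⟩) = 0 := congrFun h _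
      simp only [hc] at this
      exact hR0 (Polynomial.leadingCoeff_eq_zero.mp this)
    · funext p
      rw [mulVec_Xi]
      set j := colToRow k p.1 p.2 with hj
      have hij : p.1 ≠ j := (colToRow_ne k p.1 p.2).symm
      have hm := hmatch p.1 j hij
      rw [hQeval, hQeval] at hm
      rw [heval, heval, hlam', hmu']
      simp only [Pi.zero_apply]
      linear_combination hm
  · rintro ⟨c, hc0, hcv⟩
    set Q : Fin k → Polynomial ℂ := fun i => (Polynomial.X - Polynomial.C (y i)) * Rpoly k c i
      with hQ
    have hQeval : ∀ i x, (Q i).eval x = (x - y i) * (Rpoly k c i).eval x := by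
      intro i x; simp [hQ]
    refine ⟨Q, ?_, ?_, ?_, ?_⟩
    · intro i
      calc (Q i).degree = (Polynomial.X - Polynomial.C (y i)).degree + (Rpoly k c i).degree :=
            Polynomial.degree_mul
        _ ≤ 1 + ((k - 2 : ℕ) : WithBot ℕ) := by
            exact add_le_add (le_of_eq (Polynomial.degree_X_sub_C (y i))) (degree_Rpoly k c i)
        _ = ((k - 1 : ℕ) : WithBot ℕ) := by
            exact_mod_cast congrArg (Nat.cast : ℕ → WithBot ℕ) (by omega : 1 + (k - 2) = k - 1)
    · obtain ⟨q, hq⟩ := Function.ne_iff.mp hc0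
      refine ⟨q.1, ?_⟩
      have hRne : Rpoly k c q.1 ≠ 0 := by
        intro h
        apply hq
        rw [← coeff_Rpoly k c q.1 q.2, h]
        simp
      exact mul_ne_zero (Polynomial.X_sub_C_ne_zero (y q.1)) hRne
    · intro i; simp [hQ]
    · intro i j hij
      obtain ⟨t, ht⟩ := colToRow_surj k i j hij
      have hrow : (Xi k a lam' mu').mulVec c (i, t) = 0 := congrFun hcv (i, t)
      rw [mulVec_Xi] at hrow
      simp only [ht] at hrow
      rw [hQeval, hQeval]
      rw [hlam', hmu'] at hrow
      linear_combination hrow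


end

end ReducibleSpectral
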